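/- For all real a ≥ b ≥ 0 and x ≥ 0, 2ax - 4b(1 - e^{-x}) + b(1 - e^{-2x}) ≤ 2(a - b)x + (4/3)bx³. -/

import Mathlib

lemma aux1 (x : ℝ) (hx : 0 ≤ x) : Real.exp (-x) ≤ 1 - x + x ^ 2 / 2 := by
  have key : ∀ y ∈ Set.Ici (0:ℝ),
      HasDerivAt (fun t : ℝ => 1 - t + t ^ 2 / 2 - Real.exp (-t))
        (-1 + y + Real.exp (-y)) y := by
    intro y _
    have h1 : HasDerivAt (fun t : ℝ => Real.exp (-t)) (-Real.exp (-y)) y := by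
      have := (Real.hasDerivAt_exp (-y)).comp y (hasDerivAt_neg y)
      simpa [Function.comp_def] using this
    have h2 : HasDerivAt (fun t : ℝ => 1 - t + t ^ 2 / 2) (-1 + y) y := by
      have : HasDerivAt (fun t : ℝ => 1 - t + t ^ 2 / 2) (0 - 1 + 2 * y ^ 1 / 2) y := by
        exact (((hasDerivAt_const y (1:ℝ)).sub (hasDerivAt_id y)).add
          (((hasDerivAt_pow 2 y)).div_const 2))
      simpa using this
    exact (h2.sub h1).congr_deriv (by ring)
  have mono : MonotoneOn (fun t : ℝ => 1 - t + t ^ 2 / 2 - Real.exp (-t)) (Set.Ici 0) := by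
    apply monotoneOn_of_deriv_nonneg (convex_Ici 0)
    · exact Continuous.continuousOn (by continuity)
    · intro y hy
      rw [interior_Ici] at hy
      exact (key y (Set.mem_Ici.2 (le_of_lt (Set.mem_Ioi.1 hy)))).differentiableAt.differentiableWithinAt
    · intro y hy
      rw [interior_Ici] at hy
      rw [HasDerivAt.deriv (key y (Set.mem_Ici.2 (le_of_lt (Set.mem_Ioi.1 hy))))]
      nlinarith [Real.add_one_le_exp (-y)]
  have := mono (Set.self_mem_Ici) (Set.mem_Ici.2 hx) hx
  simp at this
  linarith

lemma aux2 (x : ℝ) (hx : 0 ≤ x) :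
    1 - 2 * x + 2 * x ^ 2 - (4 / 3) * x ^ 3 ≤ Real.exp (-2 * x) := by
  have key : ∀ y ∈ Set.Ici (0:ℝ),
      HasDerivAt (fun t : ℝ => Real.exp (-2 * t) - (1 - 2 * t + 2 * t ^ 2 - (4 / 3) * t ^ 3))
        (-2 * Real.exp (-2 * y) - (-2 + 4 * y - 4 * y ^ 2)) y := by
    intro y _
    have h1 : HasDerivAt (fun t : ℝ => Real.exp (-2 * t)) (-2 * Real.exp (-2 * y)) y := by
      have h := (Real.hasDerivAt_exp (-2 * y)).comp y
        ((hasDerivAt_id y).const_mul (-2))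
      have : ((Real.exp ∘ fun t => -2 * t) : ℝ → ℝ) = fun t => Real.exp (-2 * t) := rfl
      simp only [Function.comp_def] at h
      refine h.congr_deriv ?_
      ring
    have h2 : HasDerivAt (fun t : ℝ => 1 - 2 * t + 2 * t ^ 2 - (4 / 3) * t ^ 3)
        (-2 + 4 * y - 4 * y ^ 2) y := by
      have : HasDerivAt (fun t : ℝ => 1 - 2 * t + 2 * t ^ 2 - (4 / 3) * t ^ 3)
          (0 - 2 * 1 + 2 * (2 * y ^ 1) - (4 / 3) * (3 * y ^ 2)) y := by
        exact (((hasDerivAt_const y (1:ℝ)).sub ((hasDerivAt_id y).const_mul 2)).add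
          ((hasDerivAt_pow 2 y).const_mul 2)).sub ((hasDerivAt_pow 3 y).const_mul (4/3))
      convert this using 1
      ring
    exact h1.sub h2
  have mono : MonotoneOn
      (fun t : ℝ => Real.exp (-2 * t) - (1 - 2 * t + 2 * t ^ 2 - (4 / 3) * t ^ 3))
      (Set.Ici 0) := by
    apply monotoneOn_of_deriv_nonneg (convex_Ici 0)
    · exact Continuous.continuousOn (by continuity)
    · intro y hy
      rw [interior_Ici] at hy
      exact (key y (Set.mem_Ici.2 (le_of_lt (Set.mem_Ioi.1 hy)))).differentiableAt.differentiableWithinAt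
    · intro y hy
      rw [interior_Ici] at hy
      rw [HasDerivAt.deriv (key y (Set.mem_Ici.2 (le_of_lt (Set.mem_Ioi.1 hy))))]
      have := aux1 (2 * y) (by have := Set.mem_Ioi.1 hy; linarith)
      have h2y : Real.exp (-(2 * y)) ≤ 1 - 2 * y + (2 * y) ^ 2 / 2 := this
      have : Real.exp (-2 * y) ≤ 1 - 2 * y + 2 * y ^ 2 := by
        rw [show (-2 : ℝ) * y = -(2 * y) by ring]; nlinarith
      nlinarith
  have := mono (Set.self_mem_Ici) (Set.mem_Ici.2 hx) hx
  simp at this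
  rw [show (-2 : ℝ) * x = -(2 * x) by ring]
  linarith

theorem exp_elementary_bounds_five (a b x : ℝ) (hab : b ≤ a) (hb : 0 ≤ b) (hx : 0 ≤ x) :
    2 * a * x - 4 * b * (1 - Real.exp (-x)) + b * (1 - Real.exp (-2 * x)) ≤
      2 * (a - b) * x + (4 / 3) * b * x ^ 3 := by
  have h1 := aux1 x hx
  have h2 := aux2 x hx
  nlinarith [mul_nonneg hb (sub_nonneg.2 h1), mul_nonneg hb (sub_nonneg.2 h2)]
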